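/- Let n, k be positive integers with n ≥ k+1, let a = ⌊n/(k+1)⌋ and b = n − k·a, and let B_{n,k} be the graph obtained from a path P_b on vertex set [b] and vertex-disjoint k-cliques F₁, …, F_a by joining vertex i of the path to every vertex of F_i for each i ∈ [a]. Then ι(B_{n,k}, k) = ⌊n/(k+1)⌋. -/

import Mathlib

open SimpleGraph

variable {V : Type*}

/-- The closed neighbourhood `N[D]` of a set `D` of vertices of `G`. -/
def closedNbhd (G : SimpleGraph V) (D : Set V) : Set V :=
  {w | ∃ d ∈ D, w = d ∨ G.Adj d w}

/-- `D` is a `k`-clique isolating set of `G` if `G − N[D]` contains no `k`-clique. -/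
def IsKCliqueIsolating (G : SimpleGraph V) (k : ℕ) (D : Set V) : Prop :=
  ∀ s : Finset ((closedNbhd G D)ᶜ : Set V), ¬ (G.induce (closedNbhd G D)ᶜ).IsNClique k s

/-- `ι(G,k)`: the minimum size of a `k`-clique isolating set of `G`. -/
noncomputable def iso (G : SimpleGraph V) (k : ℕ) : ℕ :=
  sInf {m | ∃ D : Set V, IsKCliqueIsolating G k D ∧ D.ncard = m}

/-- The graph `B_{n,k}`: a path on `b = n - k⌊n/(k+1)⌋` vertices together with
`a = ⌊n/(k+1)⌋` disjoint `k`-cliques, the `i`-th clique fully joined to vertex `i` of the path. -/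
def Bgraph (n k : ℕ) : SimpleGraph (Fin (n - k * (n / (k + 1))) ⊕ Fin (n / (k + 1)) × Fin k) :=
  SimpleGraph.fromRel (fun x y =>
    match x, y with
    | Sum.inl i, Sum.inl j => (i : ℕ) + 1 = (j : ℕ)
    | Sum.inl i, Sum.inr p => (i : ℕ) = (p.1 : ℕ)
    | Sum.inr p, Sum.inr q => p.1 = q.1
    | _, _ => False)

theorem stmt12 (n k : ℕ) (hk : 0 < k) (hn : k + 1 ≤ n) :
    iso (Bgraph n k) k = n / (k + 1) := by
  classical
  set a := n / (k + 1) with ha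
  set b := n - k * a with hbdef
  have hmod : (k + 1) * a + n % (k + 1) = n := Nat.div_add_mod n (k + 1)
  have hka : (k + 1) * a = k * a + a := by ring
  have hr : n % (k + 1) < k + 1 := Nat.mod_lt n (by omega)
  have ha1 : 1 ≤ a := (Nat.one_le_div_iff (by omega)).2 hn
  have hb : b = a + n % (k + 1) := by omega
  have hab : a ≤ b := by omega
  set G := Bgraph n k with hG
  -- index function
  set idx : (Fin b ⊕ Fin a × Fin k) → ℕ :=
    (fun x => match x with | Sum.inl v => (v : ℕ) | Sum.inr q => (q.1 : ℕ)) with hidx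
  -- the candidate dominating set
  set D₀ : Set (Fin b ⊕ Fin a × Fin k) :=
    Set.range (fun i : Fin a => (Sum.inl (Fin.castLE hab i) : Fin b ⊕ Fin a × Fin k)) with hD₀
  have hinj₀ : Function.Injective
      (fun i : Fin a => (Sum.inl (Fin.castLE hab i) : Fin b ⊕ Fin a × Fin k)) :=
    fun i j h => Fin.castLE_injective hab (Sum.inl_injective h)
  have hD₀card : D₀.ncard = a := by
    rw [hD₀, ← Set.image_univ, Set.ncard_image_of_injective _ hinj₀, Set.ncard_univ,
      Nat.card_eq_fintype_card, Fintype.card_fin]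
  -- structure of the complement of the closed neighbourhood of D₀
  have hcompl : ∀ x ∈ (closedNbhd G D₀)ᶜ, ∃ v : Fin b, x = Sum.inl v ∧ a + 1 ≤ (v : ℕ) := by
    intro x hx
    rw [Set.mem_compl_iff] at hx
    match x with
    | Sum.inr p =>
        exfalso; apply hx
        refine ⟨Sum.inl (Fin.castLE hab p.1), ⟨p.1, rfl⟩, Or.inr ?_⟩
        rw [hG, Bgraph, SimpleGraph.fromRel_adj]
        exact ⟨by simp, Or.inl (by simp)⟩
    | Sum.inl v =>
        rcases lt_trichotomy (v : ℕ) a with h | h | h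
        · exfalso; apply hx
          exact ⟨Sum.inl (Fin.castLE hab ⟨(v : ℕ), h⟩), ⟨⟨(v : ℕ), h⟩, rfl⟩,
            Or.inl (by simp [Fin.ext_iff])⟩
        · exfalso; apply hx
          refine ⟨Sum.inl (Fin.castLE hab ⟨a - 1, by omega⟩), ⟨⟨a - 1, by omega⟩, rfl⟩, Or.inr ?_⟩
          rw [hG, Bgraph, SimpleGraph.fromRel_adj]
          constructor
          · simp only [ne_eq, Sum.inl.injEq, Fin.ext_iff, Fin.coe_castLE]
            omega
          · exact Or.inl (by simp; omega)
        · exact ⟨v, rfl, by omega⟩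
  have hD₀iso : IsKCliqueIsolating G k D₀ := by
    intro s hs
    obtain ⟨hclique, hcard⟩ := hs
    have hle : s.card ≤ (Finset.Ico (a + 1) b).card := by
      refine Finset.card_le_card_of_injOn (fun x => idx x.1) ?_ ?_
      · intro x hxs
        obtain ⟨v, hv, hva⟩ := hcompl x.1 x.2
        simp only [hv, hidx, Finset.mem_Ico]
        exact List.mem_range'_1.2 ⟨hva, by have := v.isLt; omega⟩
      · intro x hxs y hys hxy
        obtain ⟨v, hv, _⟩ := hcompl x.1 x.2
        obtain ⟨w, hw, _⟩ := hcompl y.1 y.2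
        apply Subtype.ext
        rw [hv, hw]
        simp only [hv, hw, hidx] at hxy
        exact congrArg Sum.inl (Fin.ext hxy)
    rw [hcard, Nat.card_Ico] at hle
    omega
  have hmem : a ∈ {m | ∃ D : Set (Fin b ⊕ Fin a × Fin k),
      IsKCliqueIsolating G k D ∧ D.ncard = m} := ⟨D₀, hD₀iso, hD₀card⟩
  refine le_antisymm (Nat.sInf_le hmem) (le_csInf ⟨a, hmem⟩ ?_)
  rintro m ⟨D, hD, rfl⟩
  -- every k-clique-isolating set has a vertex "indexed" by each i : Fin a
  have hkey : ∀ i : Fin a, ∃ d ∈ D, idx d = (i : ℕ) := by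
    intro i
    by_contra hcon
    push_neg at hcon
    have hjc : ∀ j : Fin k, Sum.inr (i, j) ∈ (closedNbhd G D)ᶜ := by
      intro j
      rw [Set.mem_compl_iff]
      rintro ⟨d, hdD, hd⟩
      apply hcon d hdD
      rcases hd with rfl | hadj
      · rfl
      · rw [hG, Bgraph, SimpleGraph.fromRel_adj] at hadj
        match d with
        | Sum.inl v =>
            rcases hadj.2 with h | h
            · exact h
            · exact absurd h not_false
        | Sum.inr q =>
            rcases hadj.2 with h | h
            · exact congrArg Fin.val h
            · exact (congrArg Fin.val h).symm
    set f : Fin k → ((closedNbhd G D)ᶜ : Set (Fin b ⊕ Fin a × Fin k)) :=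
      fun j => ⟨Sum.inr (i, j), hjc j⟩ with hf
    have hfinj : Function.Injective f := by
      intro j₁ j₂ h
      simpa [hf, Prod.ext_iff] using congrArg Subtype.val h
    apply hD (Finset.univ.map ⟨f, hfinj⟩)
    constructor
    · intro x hx y hy hxy
      simp only [Finset.coe_map, Set.mem_image, Finset.mem_coe, Finset.mem_univ,
        Function.Embedding.coeFn_mk, Finset.coe_univ, Set.image_univ, Set.mem_range] at hx hy
      obtain ⟨j₁, rfl⟩ := hx
      obtain ⟨j₂, rfl⟩ := hy
      show (Bgraph n k).Adj (Sum.inr (i, j₁)) (Sum.inr (i, j₂))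
      rw [Bgraph, SimpleGraph.fromRel_adj]
      refine ⟨fun h => hxy (congrArg f (by simpa [hf, Prod.ext_iff] using h)), Or.inl rfl⟩
    · rw [Finset.card_map, Finset.card_univ, Fintype.card_fin]
  choose g hgD hgidx using hkey
  have hginj : Function.Injective g := by
    intro i j h
    apply Fin.ext
    rw [← hgidx i, ← hgidx j, h]
  have hsub : Set.range g ⊆ D := Set.range_subset_iff.2 hgD
  have : (Set.range g).ncard = a := by
    rw [← Set.image_univ, Set.ncard_image_of_injective _ hginj, Set.ncard_univ,
      Nat.card_eq_fintype_card, Fintype.card_fin]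
  have hle := Set.ncard_le_ncard hsub (Set.toFinite D)
  omega
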